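/- Let λ > 0, K > 0, and let u : ℝ → [0,∞) be a continuous Lebesgue-integrable function. Then for all x₁, x₂ ∈ [−K, K], |∫_ℝ g_λ(y − x₁) u(y) dy − ∫_ℝ g_λ(y − x₂) u(y) dy| ≤ (√(2λ)·∫_ℝ u(y) dy + 2·sup_{y∈[−K,K]} u(y))·|x₁ − x₂|. -/

import Mathlib

open MeasureTheory Filter Set

/-- `g_λ(x) = -sgn(x) · exp(-√(2λ)·|x|)`. -/
noncomputable def gl (l : ℝ) (x : ℝ) : ℝ :=
  -Real.sign x * Real.exp (-Real.sqrt (2 * l) * |x|)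

lemma measurable_real_sign : Measurable Real.sign := by
  have : Real.sign = fun r : ℝ => if r < 0 then (-1 : ℝ) else if 0 < r then 1 else 0 := by
    funext r; rfl
  rw [this]
  exact Measurable.ite (measurableSet_lt measurable_id measurable_const)
    measurable_const
    (Measurable.ite (measurableSet_lt measurable_const measurable_id)
      measurable_const measurable_const)

lemma measurable_gl (l : ℝ) : Measurable (gl l) := by
  unfold gl
  exact (measurable_real_sign.neg).mul
    (Real.measurable_exp.comp (measurable_const.mul measurable_abs))

lemma abs_gl_le_one (l : ℝ) (x : ℝ) : |gl l x| ≤ 1 := by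
  unfold gl
  rw [abs_mul, abs_neg]
  have h1 : |Real.sign x| ≤ 1 := by
    rcases Real.sign_apply_eq x with h | h | h <;> rw [h] <;> norm_num
  have h2 : |Real.exp (-Real.sqrt (2 * l) * |x|)| ≤ 1 := by
    rw [abs_of_pos (Real.exp_pos _)]
    apply Real.exp_le_one_iff.mpr
    have := Real.sqrt_nonneg (2 * l)
    have := abs_nonneg x
    nlinarith
  calc |Real.sign x| * |Real.exp (-Real.sqrt (2 * l) * |x|)| ≤ 1 * 1 := by
        apply mul_le_mul h1 h2 (abs_nonneg _) zero_le_one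
    _ = 1 := by ring

lemma exp_sub_exp_le {a b : ℝ} (hab : a ≤ b) (hb : b ≤ 0) :
    Real.exp b - Real.exp a ≤ b - a := by
  have h1 : 1 + (a - b) ≤ Real.exp (a - b) := by
    have := Real.add_one_le_exp (a - b); linarith
  have h2 : Real.exp b * Real.exp (a - b) = Real.exp a := by
    rw [← Real.exp_add]; ring_nf
  have h3 : Real.exp b ≤ 1 := Real.exp_le_one_iff.mpr hb
  have h4 : Real.exp b * (1 + (a - b)) ≤ Real.exp b * Real.exp (a - b) :=
    mul_le_mul_of_nonneg_left h1 (Real.exp_pos b).le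
  rw [h2] at h4
  nlinarith [Real.exp_pos b]

lemma gl_neg_eq (l : ℝ) {x : ℝ} (hx : x < 0) :
    gl l x = Real.exp (Real.sqrt (2 * l) * x) := by
  unfold gl
  rw [Real.sign_of_neg hx, abs_of_neg hx]
  ring_nf

lemma gl_pos_eq (l : ℝ) {x : ℝ} (hx : 0 < x) :
    gl l x = -Real.exp (-(Real.sqrt (2 * l) * x)) := by
  unfold gl
  rw [Real.sign_of_pos hx, abs_of_pos hx]
  ring_nf

/-- Lipschitz on the negatives. -/
lemma gl_lip_neg (l : ℝ) {s t : ℝ} (hst : s ≤ t) (ht : t < 0) :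
    |gl l s - gl l t| ≤ Real.sqrt (2 * l) * (t - s) := by
  have hs : s < 0 := lt_of_le_of_lt hst ht
  rw [gl_neg_eq l hs, gl_neg_eq l ht]
  set c := Real.sqrt (2 * l) with hc
  have hc0 : 0 ≤ c := Real.sqrt_nonneg _
  have hab : c * s ≤ c * t := mul_le_mul_of_nonneg_left hst hc0
  have hb : c * t ≤ 0 := mul_nonpos_of_nonneg_of_nonpos hc0 ht.le
  have hle : Real.exp (c * s) ≤ Real.exp (c * t) := Real.exp_le_exp.mpr hab
  rw [abs_of_nonpos (by linarith)]
  have := exp_sub_exp_le hab hb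
  nlinarith

lemma gl_lip_pos (l : ℝ) {s t : ℝ} (hst : s ≤ t) (hs : 0 < s) :
    |gl l s - gl l t| ≤ Real.sqrt (2 * l) * (t - s) := by
  have ht : 0 < t := lt_of_lt_of_le hs hst
  rw [gl_pos_eq l hs, gl_pos_eq l ht]
  set c := Real.sqrt (2 * l) with hc
  have hc0 : 0 ≤ c := Real.sqrt_nonneg _
  have hab : -(c * t) ≤ -(c * s) := by nlinarith
  have hb : -(c * s) ≤ 0 := by nlinarith
  have hle : Real.exp (-(c * t)) ≤ Real.exp (-(c * s)) := Real.exp_le_exp.mpr hab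
  have key : Real.exp (-(c * s)) - Real.exp (-(c * t)) ≤ c * (t - s) := by
    have := exp_sub_exp_le hab hb
    nlinarith
  rw [abs_of_nonpos (by linarith)]
  linarith

/-- Key pointwise estimate. -/
lemma gl_diff_le (l : ℝ) {x₁ x₂ : ℝ} (h12 : x₁ ≤ x₂) (y : ℝ) :
    |gl l (y - x₁) - gl l (y - x₂)| ≤
      Real.sqrt (2 * l) * (x₂ - x₁) + 2 * Set.indicator (Set.Icc x₁ x₂) (fun _ => (1:ℝ)) y := by
  have hc0 : 0 ≤ Real.sqrt (2 * l) := Real.sqrt_nonneg _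
  by_cases hy : y ∈ Set.Icc x₁ x₂
  · rw [Set.indicator_of_mem hy]
    have h1 := abs_gl_le_one l (y - x₁)
    have h2 := abs_gl_le_one l (y - x₂)
    have : |gl l (y - x₁) - gl l (y - x₂)| ≤ |gl l (y - x₁)| + |gl l (y - x₂)| :=
      abs_sub _ _
    nlinarith
  · rw [Set.indicator_of_notMem hy]
    simp only [Set.mem_Icc, not_and_or, not_le] at hy
    rcases hy with hy | hy
    · -- y < x₁, so y - x₂ ≤ y - x₁ < 0
      have := gl_lip_neg l (s := y - x₂) (t := y - x₁) (by linarith) (by linarith)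
      rw [abs_sub_comm] at this
      have heq : (y - x₁) - (y - x₂) = x₂ - x₁ := by ring
      rw [heq] at this
      linarith
    · -- x₂ < y, so 0 < y - x₂ ≤ y - x₁
      have := gl_lip_pos l (s := y - x₂) (t := y - x₁) (by linarith) (by linarith)
      rw [abs_sub_comm] at this
      have heq : (y - x₁) - (y - x₂) = x₂ - x₁ := by ring
      rw [heq] at this
      linarith

lemma integrable_gl_mul (l : ℝ) (u : ℝ → ℝ) (hu_cont : Continuous u)
    (hu_nonneg : ∀ y, 0 ≤ u y) (hu_int : Integrable u) (x : ℝ) :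
    Integrable (fun y => gl l (y - x) * u y) := by
  apply hu_int.mono
  · exact (((measurable_gl l).comp (measurable_id.sub measurable_const)).mul
      hu_cont.measurable).aestronglyMeasurable
  · refine Filter.Eventually.of_forall fun y => ?_
    rw [Real.norm_eq_abs, Real.norm_eq_abs, abs_mul, abs_of_nonneg (hu_nonneg y)]
    calc |gl l (y - x)| * u y ≤ 1 * u y :=
          mul_le_mul_of_nonneg_right (abs_gl_le_one l _) (hu_nonneg y)
      _ = u y := one_mul _

/-- Let `λ > 0`, `K > 0`, and `u : ℝ → [0,∞)` continuous and Lebesgue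
integrable. Then for all `x₁, x₂ ∈ [−K, K]`,
`|∫ g_λ(y − x₁) u(y) dy − ∫ g_λ(y − x₂) u(y) dy|
  ≤ (√(2λ)·∫ u + 2·sup_{y ∈ [−K,K]} u(y))·|x₁ − x₂|`. -/
theorem integral_gl_density_increment (l : ℝ) (hl : 0 < l) (K : ℝ) (hK : 0 < K)
    (u : ℝ → ℝ) (hu_cont : Continuous u) (hu_nonneg : ∀ y, 0 ≤ u y)
    (hu_int : Integrable u) (x₁ x₂ : ℝ) (hx₁ : x₁ ∈ Set.Icc (-K) K)
    (hx₂ : x₂ ∈ Set.Icc (-K) K) :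
    |(∫ y, gl l (y - x₁) * u y) - ∫ y, gl l (y - x₂) * u y|
      ≤ (Real.sqrt (2 * l) * (∫ y, u y) + 2 * sSup (u '' Set.Icc (-K) K)) * |x₁ - x₂| := by
  wlog h12 : x₁ ≤ x₂ with H
  · have := H l hl K hK u hu_cont hu_nonneg hu_int x₂ x₁ hx₂ hx₁ (le_of_not_ge h12)
    rwa [abs_sub_comm x₂ x₁, abs_sub_comm (∫ y, gl l (y - x₂) * u y)] at this
  set c := Real.sqrt (2 * l) with hc
  have hc0 : 0 ≤ c := Real.sqrt_nonneg _
  set M := sSup (u '' Set.Icc (-K) K) with hM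
  have hMbdd : BddAbove (u '' Set.Icc (-K) K) :=
    (isCompact_Icc.image hu_cont).bddAbove
  have hMle : ∀ y ∈ Set.Icc (-K) K, u y ≤ M :=
    fun y hy => le_csSup hMbdd (Set.mem_image_of_mem u hy)
  have hM0 : 0 ≤ M := le_trans (hu_nonneg 0) (hMle 0 ⟨by linarith, hK.le⟩)
  have habs : |x₁ - x₂| = x₂ - x₁ := by rw [abs_sub_comm]; exact abs_of_nonneg (by linarith)
  have hIcc : Set.Icc x₁ x₂ ⊆ Set.Icc (-K) K := by
    intro y hy
    exact ⟨le_trans hx₁.1 hy.1, le_trans hy.2 hx₂.2⟩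
  have hf₁ := integrable_gl_mul l u hu_cont hu_nonneg hu_int x₁
  have hf₂ := integrable_gl_mul l u hu_cont hu_nonneg hu_int x₂
  have hind : Integrable (Set.indicator (Set.Icc x₁ x₂) u) :=
    hu_int.indicator measurableSet_Icc
  have hint0 : 0 ≤ ∫ y, u y := integral_nonneg hu_nonneg
  -- pointwise bound on |f₁ - f₂|
  have hpt : ∀ y, |gl l (y - x₁) * u y - gl l (y - x₂) * u y| ≤
      c * (x₂ - x₁) * u y + 2 * Set.indicator (Set.Icc x₁ x₂) u y := by
    intro y
    have h1 : gl l (y - x₁) * u y - gl l (y - x₂) * u y =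
        (gl l (y - x₁) - gl l (y - x₂)) * u y := by ring
    rw [h1, abs_mul, abs_of_nonneg (hu_nonneg y)]
    have h2 := gl_diff_le l h12 y
    by_cases hy : y ∈ Set.Icc x₁ x₂
    · rw [Set.indicator_of_mem hy] at h2 ⊢
      nlinarith [hu_nonneg y, abs_nonneg (gl l (y - x₁) - gl l (y - x₂))]
    · rw [Set.indicator_of_notMem hy] at h2 ⊢
      nlinarith [hu_nonneg y]
  -- combine
  have key : |(∫ y, gl l (y - x₁) * u y) - ∫ y, gl l (y - x₂) * u y| ≤
      ∫ y, (c * (x₂ - x₁) * u y + 2 * Set.indicator (Set.Icc x₁ x₂) u y) := by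
    rw [← integral_sub hf₁ hf₂]
    calc |∫ y, (gl l (y - x₁) * u y - gl l (y - x₂) * u y)| ≤
          ∫ y, |gl l (y - x₁) * u y - gl l (y - x₂) * u y| := by
            simpa [Real.norm_eq_abs] using
              norm_integral_le_integral_norm (fun y => gl l (y - x₁) * u y - gl l (y - x₂) * u y)
      _ ≤ ∫ y, (c * (x₂ - x₁) * u y + 2 * Set.indicator (Set.Icc x₁ x₂) u y) := by
          apply integral_mono ((hf₁.sub hf₂).abs)
            (((hu_int.const_mul _)).add (hind.const_mul _))
          exact hpt
  have hsplit : ∫ y, (c * (x₂ - x₁) * u y + 2 * Set.indicator (Set.Icc x₁ x₂) u y) =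
      c * (x₂ - x₁) * (∫ y, u y) + 2 * ∫ y in Set.Icc x₁ x₂, u y := by
    rw [integral_add ((hu_int.const_mul _)) (hind.const_mul _),
      integral_const_mul, integral_const_mul, integral_indicator measurableSet_Icc]
  have hsetint : ∫ y in Set.Icc x₁ x₂, u y ≤ M * (x₂ - x₁) := by
    have h1 : ∫ y in Set.Icc x₁ x₂, u y ≤ ∫ _ in Set.Icc x₁ x₂, M := by
      apply setIntegral_mono_on (hu_int.integrableOn) (integrableOn_const ?_)
        measurableSet_Icc
      · intro y hy; exact hMle y (hIcc hy)
      · rw [Real.volume_Icc]; exact ENNReal.ofReal_ne_top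
    have h2 : ∫ _ in Set.Icc x₁ x₂, (M : ℝ) = M * (x₂ - x₁) := by
      rw [setIntegral_const, Real.volume_real_Icc, smul_eq_mul,
        max_eq_left (by linarith)]
      ring
    linarith [h1, h2.symm.le]
  rw [habs]
  calc |(∫ y, gl l (y - x₁) * u y) - ∫ y, gl l (y - x₂) * u y| ≤
      c * (x₂ - x₁) * (∫ y, u y) + 2 * ∫ y in Set.Icc x₁ x₂, u y := by
        rw [← hsplit]; exact key
    _ ≤ c * (x₂ - x₁) * (∫ y, u y) + 2 * (M * (x₂ - x₁)) := by linarith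
    _ = (c * (∫ y, u y) + 2 * M) * (x₂ - x₁) := by ring
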